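/- If a planar convex body K slides freely in a circle of radius r_M (i.e., for each boundary point x of K there is a vector p such that x lies on the circle of radius r_M centered at p and K is contained in the closed disc of radius r_M centered at p), then for any two points x, y in K and any r ≥ r_M, the intersection of all closed discs of radius r containing both x and y is contained in K. -/

import Mathlib

open Metric Real

noncomputable section SpindleAux

open RealInnerProductSpace

abbrev E2 := EuclideanSpace ℝ (Fin 2)

def se0 : E2 := EuclideanSpace.single 0 1
def se1 : E2 := EuclideanSpace.single 1 1

def gam (θ : ℝ) : E2 := Real.cos θ • se0 + Real.sin θ • se1

lemma inner_combo (a b c d : ℝ) :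
    ⟪a • se0 + b • se1, c • se0 + d • se1⟫ = a * c + b * d := by
  simp [se0, se1, inner_add_left, inner_add_right, real_inner_smul_left,
    real_inner_smul_right, EuclideanSpace.inner_single_left,
    EuclideanSpace.single_apply]
  ring

lemma gam_norm (θ : ℝ) : ‖gam θ‖ = 1 := by
  have h : ⟪gam θ, gam θ⟫ = 1 := by
    rw [gam, inner_combo]
    nlinarith [Real.sin_sq_add_cos_sq θ]
  have h2 : ‖gam θ‖ ^ 2 = 1 := by
    rw [← real_inner_self_eq_norm_sq, h]
  calc ‖gam θ‖ = Real.sqrt (‖gam θ‖ ^ 2) := by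
        rw [Real.sqrt_sq (norm_nonneg _)]
    _ = 1 := by rw [h2]; exact Real.sqrt_one

lemma gam_cont : Continuous gam :=
  (Real.continuous_cos.smul continuous_const).add
    (Real.continuous_sin.smul continuous_const)

lemma gam_per (θ : ℝ) (k : ℤ) : gam (θ + k * (2 * π)) = gam θ := by
  simp [gam, Real.cos_add_int_mul_two_pi, Real.sin_add_int_mul_two_pi]

lemma gam_pi (θ : ℝ) : gam (θ + π) = - gam θ := by
  simp [gam, Real.cos_add_pi, Real.sin_add_pi]; abel

lemma gam_surj (u : E2) (hu : ‖u‖ = 1) : ∃ θ, gam θ = u := by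
  have hdecomp : u = (u 0) • se0 + (u 1) • se1 := by
    refine (PiLp.ext fun j => ?_)
    fin_cases j <;>
      simp [se0, se1, PiLp.add_apply, PiLp.smul_apply, EuclideanSpace.single_apply]
  have hsum : (u 0) ^ 2 + (u 1) ^ 2 = 1 := by
    have h := hu
    rw [EuclideanSpace.norm_eq] at h
    have h2 : Real.sqrt ((u 0) ^ 2 + (u 1) ^ 2) = 1 := by
      rw [← h]
      congr 1
      rw [Fin.sum_univ_two]
      simp [Real.norm_eq_abs, sq_abs]
    nlinarith [Real.sq_sqrt (by positivity : (0:ℝ) ≤ (u 0) ^ 2 + (u 1) ^ 2),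
      h2]
  set z : ℂ := ⟨u 0, u 1⟩ with hz
  have habs : ‖z‖ = 1 := by
    rw [Complex.norm_def, Complex.normSq_apply]
    simp only [hz]
    rw [show (z.re * z.re + z.im * z.im) = (u 0)^2 + (u 1)^2 by
      simp [hz]; ring]
    rw [hsum, Real.sqrt_one]
  have hz0 : z ≠ 0 := by
    intro h
    rw [h] at habs; simp at habs
  refine ⟨Complex.arg z, ?_⟩
  have hc : Real.cos (Complex.arg z) = u 0 := by
    rw [Complex.cos_arg hz0, habs]; simp [hz]
  have hs : Real.sin (Complex.arg z) = u 1 := by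
    rw [Complex.sin_arg, habs]; simp [hz]
  rw [gam, hc, hs, ← hdecomp]

lemma gam_combo {a b c : ℝ} :
    Real.sin (c - a) • gam b = Real.sin (c - b) • gam a + Real.sin (b - a) • gam c := by
  have h1 : Real.sin (c - a) * Real.cos b
      = Real.sin (c - b) * Real.cos a + Real.sin (b - a) * Real.cos c := by
    rw [Real.sin_sub, Real.sin_sub, Real.sin_sub]; ring
  have h2 : Real.sin (c - a) * Real.sin b
      = Real.sin (c - b) * Real.sin a + Real.sin (b - a) * Real.sin c := by
    rw [Real.sin_sub, Real.sin_sub, Real.sin_sub]; ring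
  simp only [gam, smul_add, smul_smul, h1, h2, add_smul]
  abel


def BC (K : Set E2) (rM : ℝ) (w u : E2) : Prop :=
  ∀ k ∈ K, ‖k - w‖ ^ 2 + 2 * rM * ⟪k - w, u⟫ ≤ 0

lemma sq_expand (u a : E2) (hu : ‖u‖ = 1) (c : ℝ) :
    ‖a + c • u‖ ^ 2 = ‖a‖ ^ 2 + 2 * c * ⟪a, u⟫ + c ^ 2 := by
  have h := norm_add_sq_real a (c • u)
  rw [h, real_inner_smul_right, norm_smul, hu]
  simp [Real.norm_eq_abs, mul_pow, sq_abs]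
  ring

lemma BC_of_slide {K : Set E2} {rM : ℝ} (hrM : 0 < rM) {w p : E2}
    (hd : dist w p = rM) (hsub : K ⊆ closedBall p rM) :
    ‖rM⁻¹ • (w - p)‖ = 1 ∧ BC K rM w (rM⁻¹ • (w - p)) := by
  have hwp : ‖w - p‖ = rM := by rw [← hd, dist_eq_norm]
  have hn : ‖rM⁻¹ • (w - p)‖ = 1 := by
    rw [norm_smul, hwp, Real.norm_eq_abs, abs_of_pos (inv_pos.mpr hrM)]
    field_simp
  refine ⟨hn, fun k hk => ?_⟩
  have hkp : ‖k - p‖ ≤ rM := by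
    have := hsub hk
    rwa [mem_closedBall, dist_eq_norm] at this
  have hrw : k - p = (k - w) + rM • (rM⁻¹ • (w - p)) := by
    rw [smul_smul, mul_inv_cancel₀ (ne_of_gt hrM), one_smul]
    abel
  have hexp := sq_expand (rM⁻¹ • (w - p)) (k - w) hn rM
  have h2 : ‖k - p‖ ^ 2 ≤ rM ^ 2 := by
    have h0 : (0:ℝ) ≤ ‖k - p‖ := norm_nonneg _
    nlinarith
  rw [hrw, hexp] at h2
  linarith

lemma BC_normal {K : Set E2} {rM : ℝ} (hrM : 0 < rM) {w u : E2}
    (hbc : BC K rM w u) : ∀ k ∈ K, ⟪k - w, u⟫ ≤ 0 := by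
  intro k hk
  have := hbc k hk
  nlinarith [sq_nonneg ‖k - w‖]

lemma BC_unique {K : Set E2} {rM : ℝ} (hrM : 0 < rM) {w w' u : E2}
    (hbc : BC K rM w u) (hw : w ∈ K) (hw' : w' ∈ K)
    (hmax : ∀ k ∈ K, ⟪k - w', u⟫ ≤ 0) : w' = w := by
  have h1 := hbc w' hw'
  have h2 := hmax w hw
  have h3 : ⟪w - w', u⟫ = - ⟪w' - w, u⟫ := by
    rw [← inner_neg_left]; congr 1; abel
  have h4 : (0:ℝ) ≤ ⟪w' - w, u⟫ := by rw [h3] at h2; linarith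
  have h5 : ‖w' - w‖ ^ 2 ≤ 0 := by nlinarith
  have h6 : ‖w' - w‖ = 0 := by nlinarith [sq_nonneg ‖w' - w‖, norm_nonneg (w' - w)]
  have := norm_sub_eq_zero_iff.mp h6
  exact this

lemma BC_antipodal {K : Set E2} {rM : ℝ} (hrM : 0 < rM) {w u : E2}
    (hbc : BC K rM w u) (hpos : ∀ k ∈ K, 0 ≤ ⟪k - w, u⟫)
    {a b : E2} (ha : a ∈ K) (hb : b ∈ K) (hab : a ≠ b) : False := by
  have h1 := hbc a ha
  have h2 := hpos a ha
  have ha' : a = w := by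
    have : ‖a - w‖ ^ 2 ≤ 0 := by nlinarith
    have h6 : ‖a - w‖ = 0 := by nlinarith [norm_nonneg (a - w)]
    exact norm_sub_eq_zero_iff.mp h6
  have h1b := hbc b hb
  have h2b := hpos b hb
  have hb' : b = w := by
    have : ‖b - w‖ ^ 2 ≤ 0 := by nlinarith
    have h6 : ‖b - w‖ = 0 := by nlinarith [norm_nonneg (b - w)]
    exact norm_sub_eq_zero_iff.mp h6
  exact hab (ha'.trans hb'.symm)


lemma norm_se1 : ‖se1‖ = 1 := by
  rw [se1, EuclideanSpace.norm_single]; norm_num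

lemma exists_two_points {K : Set E2} (hKint : (interior K).Nonempty) :
    ∃ a b : E2, a ∈ K ∧ b ∈ K ∧ a ≠ b := by
  obtain ⟨c, hc⟩ := hKint
  obtain ⟨ε, hε, hball⟩ := Metric.isOpen_iff.mp isOpen_interior c hc
  refine ⟨c, c + (ε/2) • se1, interior_subset hc, ?_, ?_⟩
  · apply interior_subset; apply hball
    rw [mem_ball, dist_eq_norm]
    have : c + (ε/2) • se1 - c = (ε/2) • se1 := by abel
    rw [this, norm_smul, norm_se1, Real.norm_eq_abs, abs_of_pos (by linarith)]
    linarith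
  · intro h
    have h2 : (ε/2) • se1 = 0 := by
      have : c + (ε/2) • se1 - c = (0:E2) := by rw [← h]; abel
      rwa [show c + (ε/2) • se1 - c = (ε/2) • se1 from by abel] at this
    have h3 : ‖(ε/2) • se1‖ = 0 := by rw [h2, norm_zero]
    rw [norm_smul, norm_se1, Real.norm_eq_abs, abs_of_pos (by linarith)] at h3
    linarith

lemma exists_max_frontier {K : Set E2} (hKcomp : IsCompact K) (hne : K.Nonempty)
    {u : E2} (hu : ‖u‖ = 1) :
    ∃ w, w ∈ K ∧ w ∈ frontier K ∧ ∀ k ∈ K, ⟪k - w, u⟫ ≤ 0 := by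
  obtain ⟨w, hwK, hmax⟩ := hKcomp.exists_isMaxOn hne
    ((continuous_id.inner continuous_const).continuousOn :
      ContinuousOn (fun k : E2 => ⟪k, u⟫) K)
  rw [isMaxOn_iff] at hmax
  simp only [id_eq] at hmax
  have hnormal : ∀ k ∈ K, ⟪k - w, u⟫ ≤ 0 := by
    intro k hk
    have := hmax k hk
    rw [inner_sub_left]; linarith
  refine ⟨w, hwK, ⟨subset_closure hwK, ?_⟩, hnormal⟩
  intro hwint
  obtain ⟨ε, hε, hball⟩ := Metric.isOpen_iff.mp isOpen_interior w hwint
  have hmem : w + (ε/2) • u ∈ K := by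
    apply interior_subset; apply hball
    rw [mem_ball, dist_eq_norm]
    have : w + (ε/2) • u - w = (ε/2) • u := by abel
    rw [this, norm_smul, hu, Real.norm_eq_abs, abs_of_pos (by linarith)]
    linarith
  have := hnormal _ hmem
  rw [show w + (ε/2) • u - w = (ε/2) • u from by abel, real_inner_smul_left,
    real_inner_self_eq_norm_sq, hu] at this
  nlinarith

lemma frontier_nonempty_of_compact {K : Set E2} (hKcomp : IsCompact K)
    (hne : K.Nonempty) : (frontier K).Nonempty := by
  by_contra h
  rw [Set.not_nonempty_iff_eq_empty] at h
  have hcl : IsClosed K := hKcomp.isClosed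
  have hfr : frontier K = K \ interior K := by
    rw [frontier, hcl.closure_eq]
  have hsub : K ⊆ interior K := by
    intro k hk
    by_contra hki
    have : k ∈ frontier K := by rw [hfr]; exact ⟨hk, hki⟩
    rw [h] at this; exact this
  have hopen : IsOpen K := by
    have : K = interior K := Set.Subset.antisymm hsub interior_subset
    rw [this]; exact isOpen_interior
  have huniv : K = Set.univ := IsClopen.eq_univ ⟨hcl, hopen⟩ hne
  exact hKcomp.ne_univ huniv


lemma theta_closed {K : Set E2} (hKcomp : IsCompact K) (rM : ℝ) :
    IsClosed {θ : ℝ | ∃ w ∈ K, BC K rM w (gam θ)} := by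
  haveI : CompactSpace ↥K := isCompact_iff_compactSpace.mp hKcomp
  have hW : IsClosed {q : ↥K × ℝ | BC K rM (q.1 : E2) (gam q.2)} := by
    have heq : {q : ↥K × ℝ | BC K rM (q.1 : E2) (gam q.2)} =
        ⋂ k ∈ K, {q : ↥K × ℝ |
          ‖k - (q.1 : E2)‖ ^ 2 + 2 * rM * ⟪k - (q.1 : E2), gam q.2⟫ ≤ 0} := by
      ext q
      simp only [Set.mem_setOf_eq, Set.mem_iInter, BC]
    rw [heq]
    refine isClosed_biInter fun k _ => ?_
    apply isClosed_le ?_ continuous_const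
    refine Continuous.add ?_ ?_
    · exact ((continuous_const.sub
        (continuous_subtype_val.comp continuous_fst)).norm).pow 2
    · exact continuous_const.mul
        ((continuous_const.sub (continuous_subtype_val.comp continuous_fst)).inner
          (gam_cont.comp continuous_snd))
  have himg : {θ : ℝ | ∃ w ∈ K, BC K rM w (gam θ)} =
      Prod.snd '' {q : ↥K × ℝ | BC K rM (q.1 : E2) (gam q.2)} := by
    ext θ
    constructor
    · rintro ⟨w, hw, hbc⟩
      exact ⟨(⟨w, hw⟩, θ), hbc, rfl⟩
    · rintro ⟨⟨w, θ'⟩, hbc, rfl⟩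
      exact ⟨(w : E2), w.2, hbc⟩
  rw [himg]
  exact isClosedMap_snd_of_compactSpace _ hW


lemma inner_gam_combo {w k : E2} {a b c : ℝ} :
    Real.sin (c - a) * ⟪k - w, gam b⟫
      = Real.sin (c - b) * ⟪k - w, gam a⟫ + Real.sin (b - a) * ⟪k - w, gam c⟫ := by
  rw [← real_inner_smul_right, gam_combo (a := a) (b := b) (c := c),
    inner_add_right, real_inner_smul_right, real_inner_smul_right]

set_option maxHeartbeats 2000000 in
lemma main_T {K : Set E2} {rM : ℝ}
    (hKcomp : IsCompact K) (hKconv : Convex ℝ K) (hKint : (interior K).Nonempty)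
    (hslide : ∀ x ∈ frontier K, ∃ p, dist x p = rM ∧ K ⊆ closedBall p rM) :
    ∀ u : E2, ‖u‖ = 1 → ∃ w ∈ K, BC K rM w u := by
  classical
  have hne : K.Nonempty := hKint.mono interior_subset
  obtain ⟨a0, b0, ha0K, hb0K, hab0⟩ := exists_two_points hKint
  have hKcl : IsClosed K := hKcomp.isClosed
  have hfrK : frontier K ⊆ K := hKcl.frontier_subset
  obtain ⟨wbar, hwbar⟩ := frontier_nonempty_of_compact hKcomp hne
  obtain ⟨pbar, hdbar, hsubbar⟩ := hslide wbar hwbar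
  have hrM0 : 0 ≤ rM := by rw [← hdbar]; exact dist_nonneg
  have hrM : 0 < rM := by
    rcases eq_or_lt_of_le hrM0 with h | h
    · exfalso
      have h1 := hsubbar ha0K
      have h2 := hsubbar hb0K
      rw [← h] at h1 h2
      rw [Metric.closedBall_zero] at h1 h2
      exact hab0 (h1.trans h2.symm)
    · exact h
  have hSlideBC : ∀ w ∈ frontier K, ∃ n, ‖n‖ = 1 ∧ BC K rM w n := by
    intro w hw
    obtain ⟨p, hd, hsub⟩ := hslide w hw
    obtain ⟨h1, h2⟩ := BC_of_slide hrM hd hsub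
    exact ⟨_, h1, h2⟩
  set Θ : Set ℝ := {θ : ℝ | ∃ w ∈ K, BC K rM w (gam θ)} with hΘdef
  have hΘcl : IsClosed Θ := theta_closed hKcomp rM
  have hΘper : ∀ θ ∈ Θ, ∀ m : ℤ, θ + m * (2 * π) ∈ Θ := by
    intro θ hθ m
    obtain ⟨w, hw, hbc⟩ := hθ
    exact ⟨w, hw, by rwa [gam_per]⟩
  have h2π : 0 < 2 * π := by positivity
  -- Θ nonempty
  obtain ⟨nbar, hnbar1, hnbarBC⟩ := hSlideBC wbar hwbar
  obtain ⟨θ0, hθ0⟩ := gam_surj nbar hnbar1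
  have hθ0Θ : θ0 ∈ Θ := ⟨wbar, hfrK hwbar, by rwa [hθ0]⟩
  -- main goal
  intro u hu
  by_contra hcon
  obtain ⟨θ1, hθ1gam⟩ := gam_surj u hu
  have hθ1 : θ1 ∉ Θ := by
    rintro ⟨w, hw, hbc⟩
    exact hcon ⟨w, hw, by rwa [hθ1gam] at hbc⟩
  -- construct α
  set Sa : Set ℝ := Θ ∩ Set.Icc (θ1 - 2 * π) θ1 with hSadef
  have hSane : Sa.Nonempty := by
    set m0 : ℤ := ⌊(θ1 - θ0) / (2 * π)⌋ with hm0
    refine ⟨θ0 + m0 * (2 * π), hΘper θ0 hθ0Θ m0, ?_, ?_⟩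
    · have h1 : ((θ1 - θ0) / (2 * π) - 1 : ℝ) < m0 := Int.sub_one_lt_floor _
      have h2 : ((θ1 - θ0) / (2 * π) - 1) * (2 * π) < m0 * (2 * π) := by
        exact mul_lt_mul_of_pos_right h1 h2π
      rw [sub_mul, div_mul_cancel₀ _ (ne_of_gt h2π)] at h2
      linarith
    · have h1 : (m0 : ℝ) ≤ (θ1 - θ0) / (2 * π) := Int.floor_le _
      have h2 : (m0 : ℝ) * (2 * π) ≤ ((θ1 - θ0) / (2 * π)) * (2 * π) :=
        mul_le_mul_of_nonneg_right h1 (le_of_lt h2π)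
      rw [div_mul_cancel₀ _ (ne_of_gt h2π)] at h2
      linarith
  have hSacl : IsClosed Sa := hΘcl.inter isClosed_Icc
  have hSabdd : BddAbove Sa := ⟨θ1, fun t ht => ht.2.2⟩
  set α : ℝ := sSup Sa with hαdef
  have hα : α ∈ Sa := hSacl.csSup_mem hSane hSabdd
  have hαΘ : α ∈ Θ := hα.1
  have hαlt : α < θ1 := lt_of_le_of_ne hα.2.2 (fun h => hθ1 (by rw [← h]; exact hαΘ))
  have hαge : θ1 - 2 * π ≤ α := hα.2.1
  have hgapup : ∀ θ, α < θ → θ ≤ θ1 → θ ∉ Θ := by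
    intro θ h1 h2 hθ
    have : θ ≤ α := le_csSup hSabdd ⟨hθ, by constructor <;> linarith⟩
    linarith
  -- construct β
  set Sb : Set ℝ := Θ ∩ Set.Icc θ1 (α + 2 * π) with hSbdef
  have hSbne : Sb.Nonempty := by
    refine ⟨α + 1 * (2 * π), ?_, ?_, ?_⟩
    · exact_mod_cast hΘper α hαΘ 1
    · push_cast; linarith
    · push_cast; linarith
  have hSbcl : IsClosed Sb := hΘcl.inter isClosed_Icc
  have hSbbdd : BddBelow Sb := ⟨θ1, fun t ht => ht.2.1⟩
  set β : ℝ := sInf Sb with hβdef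
  have hβ : β ∈ Sb := hSbcl.csInf_mem hSbne hSbbdd
  have hβΘ : β ∈ Θ := hβ.1
  have hβgt : θ1 < β := lt_of_le_of_ne hβ.2.1 (fun h => hθ1 (by rw [h]; exact hβΘ))
  have hβle : β ≤ α + 2 * π := hβ.2.2
  have hgapdn : ∀ θ, θ1 ≤ θ → θ < β → θ ∉ Θ := by
    intro θ h1 h2 hθ
    have : β ≤ θ := csInf_le hSbbdd ⟨hθ, by constructor <;> linarith⟩
    linarith
  have hαβ : α < β := lt_trans hαlt hβgt
  have hgap : ∀ θ, α < θ → θ < β → θ ∉ Θ := by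
    intro θ h1 h2
    rcases le_or_gt θ θ1 with h | h
    · exact hgapup θ h1 h
    · exact hgapdn θ (le_of_lt h) h2
  have hgap2 : ∀ θ, α + 2 * π < θ → θ < β + 2 * π → θ ∉ Θ := by
    intro θ h1 h2 hθ
    have hmem : θ + (-1 : ℤ) * (2 * π) ∈ Θ := hΘper θ hθ (-1)
    have : θ - 2 * π ∈ Θ := by
      rw [show θ - 2 * π = θ + (-1 : ℤ) * (2 * π) by push_cast; ring]
      exact hmem
    exact hgap (θ - 2 * π) (by linarith) (by linarith) this
  obtain ⟨wA, hwAK, hbcA⟩ := hαΘ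
  obtain ⟨wB, hwBK, hbcB⟩ := hβΘ
  have hπ : 0 < π := Real.pi_pos
  -- dichotomy
  have hdich : ∀ θ, α < θ → θ < β →
      (∀ k ∈ K, ⟪k - wA, gam θ⟫ ≤ 0) ∨ (∀ k ∈ K, ⟪k - wB, gam θ⟫ ≤ 0) := by
    intro θ hθa hθb
    obtain ⟨w, hwK, hwF, hwN⟩ := exists_max_frontier hKcomp hne (gam_norm θ)
    obtain ⟨n, hn1, hbcn⟩ := hSlideBC w hwF
    obtain ⟨ψ0, hψ0⟩ := gam_surj n hn1
    -- shift ψ0 into (θ, θ + 2π]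
    set m1 : ℤ := ⌊(θ + 2 * π - ψ0) / (2 * π)⌋ with hm1
    set ψ : ℝ := ψ0 + m1 * (2 * π) with hψdef
    have hψgam : gam ψ = n := by rw [hψdef, gam_per, hψ0]
    have hψub : ψ ≤ θ + 2 * π := by
      have h1 : (m1 : ℝ) ≤ (θ + 2 * π - ψ0) / (2 * π) := Int.floor_le _
      have h2 : (m1 : ℝ) * (2 * π) ≤ ((θ + 2 * π - ψ0) / (2 * π)) * (2 * π) :=
        mul_le_mul_of_nonneg_right h1 (le_of_lt h2π)
      rw [div_mul_cancel₀ _ (ne_of_gt h2π)] at h2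
      linarith
    have hψlb : θ < ψ := by
      have h1 : ((θ + 2 * π - ψ0) / (2 * π) - 1 : ℝ) < m1 := Int.sub_one_lt_floor _
      have h2 : ((θ + 2 * π - ψ0) / (2 * π) - 1) * (2 * π) < m1 * (2 * π) :=
        mul_lt_mul_of_pos_right h1 h2π
      rw [sub_mul, div_mul_cancel₀ _ (ne_of_gt h2π)] at h2
      linarith
    have hψΘ : ψ ∈ Θ := ⟨w, hwK, by rwa [hψgam]⟩
    have hψβ : β ≤ ψ := by
      by_contra h
      push_neg at h
      exact hgap ψ (lt_trans hθa hψlb) h hψΘ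
    have hψα : ψ ≤ α + 2 * π := by
      by_contra h
      push_neg at h
      have h2 : ψ < β + 2 * π := lt_of_le_of_lt hψub (by linarith)
      exact hgap2 ψ h h2 hψΘ
    have hnN : ∀ k ∈ K, ⟪k - w, n⟫ ≤ 0 := BC_normal hrM hbcn
    rcases lt_trichotomy (ψ - θ) π with hcase | hcase | hcase
    · -- ψ - θ < π : w = wB
      right
      have hs : 0 < Real.sin (ψ - θ) :=
        Real.sin_pos_of_pos_of_lt_pi (by linarith) hcase
      have hs1 : 0 ≤ Real.sin (ψ - β) :=
        Real.sin_nonneg_of_nonneg_of_le_pi (by linarith) (by linarith)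
      have hs2 : 0 ≤ Real.sin (β - θ) :=
        Real.sin_nonneg_of_nonneg_of_le_pi (by linarith) (by linarith)
      have hwNB : ∀ k ∈ K, ⟪k - w, gam β⟫ ≤ 0 := by
        intro k hk
        have hid := inner_gam_combo (w := w) (k := k) (a := θ) (b := β) (c := ψ)
        have h1 := hwN k hk
        have h2 : ⟪k - w, gam ψ⟫ ≤ 0 := by rw [hψgam]; exact hnN k hk
        nlinarith [mul_nonneg hs1 (neg_nonneg.mpr h1), mul_nonneg hs2 (neg_nonneg.mpr h2)]
      have : w = wB := BC_unique hrM hbcB hwBK hwK hwNB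
      rw [← this]
      exact hwN
    · -- ψ - θ = π : degenerate
      exfalso
      have hψθ : ψ = θ + π := by linarith
      have hngam : n = - gam θ := by rw [← hψgam, hψθ, gam_pi]
      have hpos : ∀ k ∈ K, 0 ≤ ⟪k - w, n⟫ := by
        intro k hk
        rw [hngam, inner_neg_right]
        linarith [hwN k hk]
      exact BC_antipodal hrM hbcn hpos ha0K hb0K hab0
    · -- ψ - θ > π : w = wA
      left
      set ψ' : ℝ := ψ - 2 * π with hψ'def
      have hψ'gam : gam ψ' = n := by
        rw [← hψgam, show ψ = ψ' + (1 : ℤ) * (2 * π) by push_cast; ring, gam_per]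
      have hψ'α : ψ' ≤ α := by linarith
      have hθψ'pos : 0 < θ - ψ' := by
        have : ψ < θ + 2 * π := lt_of_le_of_lt hψα (by linarith)
        simp only [hψ'def]
        linarith
      have hθψ'pi : θ - ψ' < π := by simp only [hψ'def]; linarith
      have hs : 0 < Real.sin (θ - ψ') :=
        Real.sin_pos_of_pos_of_lt_pi hθψ'pos hθψ'pi
      have hs1 : 0 ≤ Real.sin (θ - α) :=
        Real.sin_nonneg_of_nonneg_of_le_pi (by linarith) (by linarith)
      have hs2 : 0 ≤ Real.sin (α - ψ') :=
        Real.sin_nonneg_of_nonneg_of_le_pi (by linarith) (by linarith)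
      have hwNA : ∀ k ∈ K, ⟪k - w, gam α⟫ ≤ 0 := by
        intro k hk
        have hid := inner_gam_combo (w := w) (k := k) (a := ψ') (b := α) (c := θ)
        have h1 := hwN k hk
        have h2 : ⟪k - w, gam ψ'⟫ ≤ 0 := by rw [hψ'gam]; exact hnN k hk
        nlinarith [mul_nonneg hs1 (neg_nonneg.mpr h1), mul_nonneg hs2 (neg_nonneg.mpr h2)]
      have : w = wA := BC_unique hrM hbcA hwAK hwK hwNA
      rw [← this]
      exact hwN
  rcases eq_or_ne wA wB with hEq | hNe
  · -- wA = wB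
    have hbcB' : BC K rM wA (gam β) := by rw [hEq]; exact hbcB
    have hβα : β - α < π := by
      by_contra hge
      push_neg at hge
      have hαπβ : α + π ≤ β := by linarith
      have hpos : ∀ k ∈ K, 0 ≤ ⟪k - wA, gam α⟫ := by
        rcases eq_or_lt_of_le hαπβ with h | h
        · intro k hk
          have h2 := hbcB' k hk
          rw [← h, gam_pi, inner_neg_right] at h2
          nlinarith [sq_nonneg ‖k - wA‖]
        · have hd := hdich (α + π) (by linarith) h
          have hnm : ∀ k ∈ K, ⟪k - wA, gam (α + π)⟫ ≤ 0 := by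
            rcases hd with h' | h'
            · exact h'
            · rw [hEq]; exact h'
          intro k hk
          have h3 := hnm k hk
          rw [gam_pi, inner_neg_right] at h3
          linarith
      exact BC_antipodal hrM hbcA hpos ha0K hb0K hab0
    have hs : 0 < Real.sin (β - α) :=
      Real.sin_pos_of_pos_of_lt_pi (by linarith) hβα
    have hs1 : 0 ≤ Real.sin (β - θ1) :=
      Real.sin_nonneg_of_nonneg_of_le_pi (by linarith) (by linarith)
    have hs2 : 0 ≤ Real.sin (θ1 - α) :=
      Real.sin_nonneg_of_nonneg_of_le_pi (by linarith) (by linarith)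
    have hsum : Real.sin (β - α) ≤ Real.sin (β - θ1) + Real.sin (θ1 - α) := by
      have hid := gam_combo (a := α) (b := θ1) (c := β)
      have h1 : ‖Real.sin (β - α) • gam θ1‖ = Real.sin (β - α) := by
        rw [norm_smul, gam_norm, Real.norm_eq_abs, abs_of_pos hs]; ring
      have h2 : ‖Real.sin (β - θ1) • gam α + Real.sin (θ1 - α) • gam β‖
          ≤ Real.sin (β - θ1) + Real.sin (θ1 - α) := by
        refine le_trans (norm_add_le _ _) (le_of_eq ?_)
        rw [norm_smul, norm_smul, gam_norm, gam_norm, Real.norm_eq_abs,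
          Real.norm_eq_abs, abs_of_nonneg hs1, abs_of_nonneg hs2]
        ring
      calc Real.sin (β - α) = ‖Real.sin (β - α) • gam θ1‖ := h1.symm
        _ = ‖Real.sin (β - θ1) • gam α + Real.sin (θ1 - α) • gam β‖ := by rw [hid]
        _ ≤ _ := h2
    have hbcθ1 : BC K rM wA (gam θ1) := by
      intro k hk
      have h1 := hbcA k hk
      have h2 := hbcB' k hk
      have hid := inner_gam_combo (w := wA) (k := k) (a := α) (b := θ1) (c := β)
      nlinarith [sq_nonneg ‖k - wA‖,
        mul_nonneg hs1 (neg_nonneg.mpr h1),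
        mul_nonneg hs2 (neg_nonneg.mpr h2),
        mul_nonneg (by linarith : (0:ℝ) ≤ Real.sin (β - θ1) + Real.sin (θ1 - α)
          - Real.sin (β - α)) (sq_nonneg ‖k - wA‖)]
    exact hθ1 ⟨wA, hwAK, hbcθ1⟩
  · -- wA ≠ wB
    set SA : Set ℝ := {t | t ∈ Set.Icc α β ∧ ∀ k ∈ K, ⟪k - wA, gam t⟫ ≤ 0}
      with hSAdef
    have hSAcl : IsClosed SA := by
      have heq : SA = Set.Icc α β ∩ ⋂ k ∈ K, {t : ℝ | ⟪k - wA, gam t⟫ ≤ 0} := by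
        ext t
        constructor
        · rintro ⟨h1, h2⟩
          exact ⟨h1, Set.mem_iInter₂.mpr h2⟩
        · rintro ⟨h1, h2⟩
          exact ⟨h1, fun k hk => Set.mem_iInter₂.mp h2 k hk⟩
      rw [heq]
      exact isClosed_Icc.inter (isClosed_biInter fun k _ =>
        isClosed_le (continuous_const.inner gam_cont) continuous_const)
    have hαSA : α ∈ SA := ⟨⟨le_refl _, le_of_lt hαβ⟩, BC_normal hrM hbcA⟩
    have hSAne : SA.Nonempty := ⟨α, hαSA⟩
    have hSAbdd : BddAbove SA := ⟨β, fun t ht => ht.1.2⟩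
    set t0 : ℝ := sSup SA with ht0def
    have ht0 : t0 ∈ SA := hSAcl.csSup_mem hSAne hSAbdd
    have ht0α : α ≤ t0 := le_csSup hSAbdd hαSA
    have ht0β : t0 ≤ β := ht0.1.2
    have ht0β' : t0 < β := by
      rcases eq_or_lt_of_le ht0β with h | h
      · exact absurd (BC_unique hrM hbcB hwBK hwAK
          (by rw [← h]; exact ht0.2)) hNe
      · exact h
    have hBnorm : ∀ k ∈ K, ⟪k - wB, gam t0⟫ ≤ 0 := by
      intro k hk
      have hsubset : Set.Ioc t0 β ⊆ {t : ℝ | ⟪k - wB, gam t⟫ ≤ 0} := by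
        intro t ht
        rcases eq_or_lt_of_le ht.2 with h | h
        · rw [h]; exact BC_normal hrM hbcB k hk
        · rcases hdich t (lt_of_le_of_lt ht0α ht.1) h with h' | h'
          · exfalso
            have hle : t ≤ t0 := le_csSup hSAbdd
              ⟨⟨le_of_lt (lt_of_le_of_lt ht0α ht.1), le_of_lt h⟩, h'⟩
            linarith [ht.1]
          · exact h' k hk
      have hclosed : IsClosed {t : ℝ | ⟪k - wB, gam t⟫ ≤ 0} :=
        isClosed_le (continuous_const.inner gam_cont) continuous_const
      have hmem : t0 ∈ closure (Set.Ioc t0 β) := by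
        rw [closure_Ioc (ne_of_lt ht0β')]
        exact ⟨le_refl _, le_of_lt ht0β'⟩
      have hfin := closure_mono hsubset hmem
      rwa [hclosed.closure_eq] at hfin
    set g : E2 := gam t0 with hgdef
    have hg1 : ‖g‖ = 1 := gam_norm t0
    have hgA : ∀ k ∈ K, ⟪k - wA, g⟫ ≤ 0 := ht0.2
    have hgB : ∀ k ∈ K, ⟪k - wB, g⟫ ≤ 0 := hBnorm
    set m : E2 := wA + (2⁻¹ : ℝ) • (wB - wA) with hmdef
    have hmK : m ∈ K := hKconv.add_smul_sub_mem hwAK hwBK ⟨by norm_num, by norm_num⟩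
    have hABg : ⟪wB - wA, g⟫ = 0 := by
      have h1 := hgA wB hwBK
      have h2 := hgB wA hwAK
      have h3 : ⟪wA - wB, g⟫ = - ⟪wB - wA, g⟫ := by
        rw [← inner_neg_left]; congr 1; abel
      rw [h3] at h2
      linarith
    have hmN : ∀ k ∈ K, ⟪k - m, g⟫ ≤ 0 := by
      intro k hk
      have hrw : k - m = (k - wA) - (2⁻¹ : ℝ) • (wB - wA) := by
        rw [hmdef]; abel
      rw [hrw, inner_sub_left, real_inner_smul_left, hABg]
      have := hgA k hk
      linarith
    have hmF : m ∈ frontier K := by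
      refine ⟨subset_closure hmK, ?_⟩
      intro hmint
      obtain ⟨ε, hε, hball⟩ := Metric.isOpen_iff.mp isOpen_interior m hmint
      have hmem2 : m + (ε/2) • g ∈ K := by
        apply interior_subset; apply hball
        rw [mem_ball, dist_eq_norm,
          show m + (ε/2) • g - m = (ε/2) • g from by abel,
          norm_smul, hg1, Real.norm_eq_abs, abs_of_pos (by linarith)]
        linarith
      have hin := hmN _ hmem2
      rw [show m + (ε/2) • g - m = (ε/2) • g from by abel,
        real_inner_smul_left] at hin
      have hgg : ⟪g, g⟫ = 1 := by
        rw [real_inner_self_eq_norm_sq, hg1]; norm_num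
      rw [hgg] at hin
      nlinarith
    obtain ⟨nm, hnm1, hbcm⟩ := hSlideBC m hmF
    have h1 := hbcm wA hwAK
    have h2 := hbcm wB hwBK
    have hv1 : wA - m = -((2⁻¹ : ℝ) • (wB - wA)) := by rw [hmdef]; abel
    have hv2 : wB - m = (2⁻¹ : ℝ) • (wB - wA) := by
      have e1 : (1:ℝ) • (wB - wA) - (2⁻¹:ℝ) • (wB - wA) = (2⁻¹:ℝ) • (wB - wA) := by
        rw [← sub_smul]; norm_num
      rw [← e1, one_smul, hmdef]; abel
    have hinner : ⟪wA - m, nm⟫ + ⟪wB - m, nm⟫ = 0 := by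
      rw [hv1, hv2, inner_neg_left]; ring
    have hnorm1 : ‖wA - m‖ = ‖(2⁻¹:ℝ) • (wB - wA)‖ := by rw [hv1, norm_neg]
    have hnorm2 : ‖wB - m‖ = ‖(2⁻¹:ℝ) • (wB - wA)‖ := by rw [hv2]
    have hposn : 0 < ‖(2⁻¹:ℝ) • (wB - wA)‖ := by
      rw [norm_smul]
      apply mul_pos
      · rw [Real.norm_eq_abs]; norm_num
      · exact norm_pos_iff.mpr (sub_ne_zero.mpr (Ne.symm hNe))
    nlinarith [h1, h2, hinner, hnorm1, hnorm2, hposn]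

end SpindleAux

open RealInnerProductSpace in
/-- If a planar convex body `K` slides freely in a circle of radius `rM`, then for any
two points `x, y ∈ K` and any `r ≥ rM`, the `r`-spindle of `x` and `y` (the intersection of
all closed discs of radius `r` containing both points) is contained in `K`. -/
theorem spindle_subset_of_slides_freely
    (K : Set (EuclideanSpace ℝ (Fin 2))) (rM : ℝ)
    (hKcomp : IsCompact K) (hKconv : Convex ℝ K) (hKint : (interior K).Nonempty)
    (hslide : ∀ x ∈ frontier K, ∃ p, dist x p = rM ∧ K ⊆ closedBall p rM)
    (x y : EuclideanSpace ℝ (Fin 2)) (hx : x ∈ K) (hy : y ∈ K)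
    (r : ℝ) (hr : rM ≤ r) :
    ⋂ p ∈ {p : EuclideanSpace ℝ (Fin 2) | x ∈ closedBall p r ∧ y ∈ closedBall p r},
      closedBall p r ⊆ K := by
  intro z hz
  by_contra hzK
  have hne : K.Nonempty := hKint.mono interior_subset
  -- rM > 0
  obtain ⟨a0, b0, ha0K, hb0K, hab0⟩ := exists_two_points hKint
  obtain ⟨wbar, hwbar⟩ := frontier_nonempty_of_compact hKcomp hne
  obtain ⟨pbar, hdbar, hsubbar⟩ := hslide wbar hwbar
  have hrM0 : 0 ≤ rM := by rw [← hdbar]; exact dist_nonneg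
  have hrM : 0 < rM := by
    rcases eq_or_lt_of_le hrM0 with h | h
    · exfalso
      have h1 := hsubbar ha0K
      have h2 := hsubbar hb0K
      rw [← h] at h1 h2
      rw [Metric.closedBall_zero] at h1 h2
      exact hab0 (h1.trans h2.symm)
    · exact h
  -- metric projection of z onto K
  obtain ⟨w, hwK, hmin⟩ := hKcomp.exists_isMinOn hne
    ((continuous_const.dist continuous_id).continuousOn :
      ContinuousOn (fun k : E2 => dist z k) K)
  rw [isMinOn_iff] at hmin
  have hzw : z ≠ w := fun h => hzK (h ▸ hwK)
  set d : ℝ := ‖z - w‖ with hd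
  have hd0 : 0 < d := norm_pos_iff.mpr (sub_ne_zero.mpr hzw)
  set u : E2 := d⁻¹ • (z - w) with hu
  have hu1 : ‖u‖ = 1 := by
    rw [hu, norm_smul, Real.norm_eq_abs, abs_of_pos (inv_pos.mpr hd0), ← hd]
    field_simp
  have hvar : ∀ k ∈ K, ⟪z - w, k - w⟫ ≤ 0 := by
    intro k hk
    by_contra hcon
    push_neg at hcon
    rcases eq_or_ne k w with hkw | hkw
    · rw [hkw] at hcon; simp at hcon
    · set c : ℝ := ⟪z - w, k - w⟫ with hc
      have hkw2 : 0 < ‖k - w‖ ^ 2 :=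
        pow_pos (norm_pos_iff.mpr (sub_ne_zero.mpr hkw)) 2
      set t : ℝ := min 1 (c / ‖k - w‖ ^ 2) with ht
      have ht0 : 0 < t := lt_min one_pos (div_pos hcon hkw2)
      have ht1 : t ≤ 1 := min_le_left _ _
      have hmem : w + t • (k - w) ∈ K :=
        hKconv.add_smul_sub_mem hwK hk ⟨le_of_lt ht0, ht1⟩
      have hge := hmin _ hmem
      have hdist : ‖z - w‖ ≤ ‖z - (w + t • (k - w))‖ := by
        rw [dist_eq_norm, dist_eq_norm] at hge
        exact hge
      have hexp : ‖z - (w + t • (k - w))‖ ^ 2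
          = ‖z - w‖ ^ 2 - 2 * t * c + t ^ 2 * ‖k - w‖ ^ 2 := by
        rw [show z - (w + t • (k - w)) = (z - w) - t • (k - w) from by abel,
          norm_sub_sq_real, real_inner_smul_right, norm_smul, Real.norm_eq_abs]
        rw [mul_pow, sq_abs]
        rw [← hc]
        ring
      have hsq : ‖z - w‖ ^ 2 ≤ ‖z - (w + t • (k - w))‖ ^ 2 := by
        nlinarith [norm_nonneg (z - w), norm_nonneg (z - (w + t • (k - w)))]
      rw [hexp] at hsq
      have htc : t * ‖k - w‖ ^ 2 ≤ c := by
        have h5 : t ≤ c / ‖k - w‖ ^ 2 := min_le_right _ _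
        rwa [le_div_iff₀ hkw2] at h5
      nlinarith [mul_le_mul_of_nonneg_left htc (le_of_lt ht0), mul_pos ht0 hcon]
  have hnormal : ∀ k ∈ K, ⟪k - w, u⟫ ≤ 0 := by
    intro k hk
    rw [hu, real_inner_smul_right, real_inner_comm]
    have := hvar k hk
    have hdinv : 0 < d⁻¹ := inv_pos.mpr hd0
    exact mul_nonpos_of_nonneg_of_nonpos (le_of_lt hdinv) this
  obtain ⟨w', hw'K, hbc'⟩ := main_T hKcomp hKconv hKint hslide u hu1
  have hww' : w = w' := BC_unique hrM hbc' hw'K hwK hnormal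
  have hbcw : BC K rM w u := by rw [hww']; exact hbc'
  set q : E2 := w - r • u with hq
  have hsub : K ⊆ closedBall q r := by
    intro k hk
    rw [mem_closedBall, dist_eq_norm]
    have hexp : ‖k - q‖ ^ 2 = ‖k - w‖ ^ 2 + 2 * r * ⟪k - w, u⟫ + r ^ 2 := by
      rw [show k - q = (k - w) + r • u from by rw [hq]; abel]
      exact sq_expand u (k - w) hu1 r
    have h1 := hbcw k hk
    have h2 : ⟪k - w, u⟫ ≤ 0 := BC_normal hrM hbcw k hk
    have hsq : ‖k - q‖ ^ 2 ≤ r ^ 2 := by nlinarith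
    by_contra hcon
    push_neg at hcon
    have hrpos : 0 < r := lt_of_lt_of_le hrM hr
    nlinarith [norm_nonneg (k - q)]
  have hqmem : q ∈ {p : EuclideanSpace ℝ (Fin 2) |
      x ∈ closedBall p r ∧ y ∈ closedBall p r} := ⟨hsub hx, hsub hy⟩
  have hzq : z ∈ closedBall q r := Set.mem_iInter₂.mp hz q hqmem
  rw [mem_closedBall, dist_eq_norm] at hzq
  have hzwu : z - w = d • u := by
    rw [hu, smul_smul, mul_inv_cancel₀ (ne_of_gt hd0), one_smul]
  have hzqn : ‖z - q‖ = d + r := by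
    rw [show z - q = (z - w) + r • u from by rw [hq]; abel, hzwu, ← add_smul,
      norm_smul, hu1, Real.norm_eq_abs, mul_one,
      abs_of_pos (by linarith : (0:ℝ) < d + r)]
  linarith
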